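/- arXiv:math/9803032 — 5 statements merged into one kernel-verified Lean document; each statement's English description precedes it below -/
import Mathlib

section
/- Let p ≥ 1 be an integer, n = 2p+1, and let q ∈ ℂ satisfy q^n = 1 and q ≠ 1. Then there exists a : ZMod n → ℂ with a(i) ≠ 0 for all i, such that for every i ∈ ZMod n, ‖a(i+2)‖² − ‖a(i)‖² = (q^(i+2) − q^(−(i+2)))/(q − q⁻¹) (equality in ℂ, with the real number ‖a(i+2)‖² − ‖a(i)‖² coerced to ℂ). -/
theorem stmt_7 (p : ℕ) (hp : 1 ≤ p) (q : ℂ) (hq : q ^ (2 * p + 1) = 1)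
    (hq1 : q ≠ 1) :
    ∃ a : ZMod (2 * p + 1) → ℂ, (∀ i, a i ≠ 0) ∧
      ∀ i : ZMod (2 * p + 1),
        ((‖a (i + 2)‖ ^ 2 - ‖a i‖ ^ 2 : ℝ) : ℂ) =
          (q ^ (i + 2).val - (q ^ (i + 2).val)⁻¹) / (q - q⁻¹) := by
  have hn : 2 * p + 1 ≠ 0 := by omega
  haveI : NeZero (2 * p + 1) := ⟨hn⟩
  have hq0 : q ≠ 0 := by
    intro h; rw [h, zero_pow hn] at hq; exact zero_ne_one hq
  have habs : ‖q‖ = 1 := by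
    have h1 : ‖q‖ ^ (2 * p + 1) = 1 := by
      rw [← norm_pow, hq, norm_one]
    rcases pow_eq_one_iff_cases.mp h1 with h | h | h
    · omega
    · exact h
    · nlinarith [norm_nonneg q]
  have hconj : (starRingEnd ℂ) q = q⁻¹ := (Complex.inv_eq_conj habs).symm
  have hq2 : q ^ 2 ≠ 1 := by
    intro h
    have hfac : (q - 1) * (q + 1) = 0 := by linear_combination h
    rcases mul_eq_zero.1 hfac with h1 | h2
    · exact hq1 (by linear_combination h1)
    · have hqm : q = -1 := by linear_combination h2
      rw [hqm, Odd.neg_one_pow ⟨p, by ring⟩] at hq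
      norm_num at hq
  have hq21 : q ^ 2 - 1 ≠ 0 := sub_ne_zero.2 hq2
  have hqq : q - q⁻¹ ≠ 0 := by
    rw [sub_ne_zero]
    intro h
    apply hq2
    rw [sq]
    nth_rewrite 2 [h]
    rw [mul_inv_cancel₀ hq0]
  set Q : ZMod (2 * p + 1) → ℂ := fun i => q ^ i.val with hQdef
  have hQmod : ∀ m : ℕ, q ^ (m % (2 * p + 1)) = q ^ m := by
    intro m
    conv_rhs => rw [← Nat.mod_add_div m (2 * p + 1)]
    rw [pow_add, pow_mul, hq, one_pow, mul_one]
  have hQmul : ∀ x y : ZMod (2 * p + 1), Q (x + y) = Q x * Q y := by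
    intro x y
    simp only [hQdef, ZMod.val_add, hQmod, pow_add]
  have hQ2 : ∀ i : ZMod (2 * p + 1), Q (i + 2) = Q i * q ^ 2 := by
    intro i
    rw [hQmul]
    congr 1
    show q ^ (2 : ZMod (2 * p + 1)).val = q ^ 2
    have : ((2 : ZMod (2 * p + 1))).val = 2 := by
      have : ((2 : ℕ) : ZMod (2 * p + 1)).val = 2 % (2 * p + 1) := ZMod.val_natCast (2 * p + 1) 2
      simpa [Nat.mod_eq_of_lt (by omega : 2 < 2 * p + 1)] using this
    rw [this]
  have hQ0 : ∀ i, Q i ≠ 0 := fun i => pow_ne_zero _ hq0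
  have hQabs : ∀ i, ‖Q i‖ = 1 := by
    intro i; simp [hQdef, norm_pow, habs]
  have hQconj : ∀ i, (starRingEnd ℂ) (Q i) = (Q i)⁻¹ :=
    fun i => (Complex.inv_eq_conj (hQabs i)).symm
  set F : ZMod (2 * p + 1) → ℂ := fun i => (Q i - (Q i)⁻¹) / (q - q⁻¹) with hFdef
  have hFreal : ∀ i, ((F i).re : ℂ) = F i := by
    intro i
    rw [← Complex.conj_eq_iff_re]
    simp only [hFdef, map_div₀, map_sub, map_inv₀, hQconj, hconj, inv_inv]
    rw [show (Q i)⁻¹ - Q i = -(Q i - (Q i)⁻¹) by ring,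
        show q⁻¹ - q = -(q - q⁻¹) by ring, neg_div_neg_eq]
  set h : ZMod (2 * p + 1) → ℂ :=
    fun i => (Q i * q ^ 3 + (Q i)⁻¹ * q) / (q ^ 2 - 1) ^ 2 with hhdef
  have key : ∀ i, h (i + 2) - h i = F (i + 2) := by
    intro i
    have hx := hQ0 i
    simp only [hhdef, hFdef, hQ2 i]
    generalize Q i = x at hx ⊢
    rw [div_sub_div_same, div_eq_div_iff (pow_ne_zero 2 hq21) hqq,
      inv_eq_one_div (x * q ^ 2), inv_eq_one_div x, inv_eq_one_div q]
    have hxq : x * q ^ 2 ≠ 0 := mul_ne_zero hx (pow_ne_zero 2 hq0)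
    field_simp
    ring
  set S := ∑ j : ZMod (2 * p + 1), |(h j).re| with hSdef
  set b : ZMod (2 * p + 1) → ℝ := fun i => 1 + S + (h i).re with hbdef
  have hb : ∀ i, 0 < b i := by
    intro i
    have h1 : |(h i).re| ≤ S :=
      Finset.single_le_sum (f := fun j => |(h j).re|) (fun j _ => abs_nonneg _) (Finset.mem_univ i)
    have h2 := neg_abs_le ((h i).re)
    simp only [hbdef]
    linarith
  refine ⟨fun i => (Real.sqrt (b i) : ℂ), fun i => ?_, fun i => ?_⟩
  · simpa using Complex.ofReal_ne_zero.2 (Real.sqrt_pos.2 (hb i)).ne'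
  · have hnorm : ∀ j, ‖((Real.sqrt (b j) : ℝ) : ℂ)‖ ^ 2 = b j := by
      intro j
      rw [Complex.norm_real, Real.norm_eq_abs, sq_abs, Real.sq_sqrt (hb j).le]
    rw [hnorm, hnorm]
    have hdiff : (b (i + 2) - b i : ℝ) = (F (i + 2)).re := by
      have : b (i + 2) - b i = (h (i + 2) - h i).re := by
        simp [hbdef, Complex.sub_re]
      rw [this, key i]
    rw [hdiff, hFreal]
end

section
/- Let p ≥ 1 be an integer, n = 2p+1, and let q ∈ ℂ satisfy q^n = 1 and q ≠ 1. Let a : ZMod n → ℂ satisfy the recurrence: for all i ∈ ZMod n, ‖a(i+2)‖² − ‖a(i)‖² = (q^(i+2) − q^(−(i+2)))/(q − q⁻¹) (equality in ℂ). Let K be the diagonal matrix with K_{i,i} = q^i, let E₊ have (i,j) entry a(i) if j = i+2 and 0 otherwise, and let E₋ have (i,j) entry conj(a(j)) if i = j+2 and 0 otherwise. Then E₊ · E₋ − E₋ · E₊ = (K − K⁻¹) / (q − q⁻¹), where K⁻¹ is the diagonal matrix with entries q^(−i). -/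
theorem stmt_12 (p : ℕ) (hp : 1 ≤ p) (q : ℂ) (hq : q ^ (2 * p + 1) = 1)
    (hq1 : q ≠ 1) (a : ZMod (2 * p + 1) → ℂ)
    (ha : ∀ i : ZMod (2 * p + 1),
      ((‖a (i + 2)‖ ^ 2 - ‖a i‖ ^ 2 : ℝ) : ℂ) =
        (q ^ (i + 2).val - (q ^ (i + 2).val)⁻¹) / (q - q⁻¹))
    (K Kinv Eplus Eminus : Matrix (ZMod (2 * p + 1)) (ZMod (2 * p + 1)) ℂ)
    (hK : K = Matrix.diagonal fun i => q ^ i.val)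
    (hKinv : Kinv = Matrix.diagonal fun i => (q ^ i.val)⁻¹)
    (hEplus : Eplus = Matrix.of fun i j => if j = i + 2 then a i else 0)
    (hEminus : Eminus = Matrix.of fun i j => if i = j + 2 then star (a j) else 0) :
    Eplus * Eminus - Eminus * Eplus = (q - q⁻¹)⁻¹ • (K - Kinv) := by
  subst hK hKinv hEplus hEminus
  ext i j
  simp only [Matrix.sub_apply, Matrix.mul_apply, Matrix.of_apply, Matrix.smul_apply,
    Matrix.diagonal_apply, smul_eq_mul, ite_mul, mul_ite, zero_mul, mul_zero,
    Finset.sum_ite_eq', Finset.mem_univ, if_true]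
  by_cases h : i = j
  · subst h
    simp only [if_pos rfl]
    have key := ha (i - 2)
    rw [sub_add_cancel] at key
    push_cast at key
    have h1 : a i * star (a i) = (‖a i‖ : ℂ) ^ 2 := by
      rw [RCLike.star_def, Complex.mul_conj']
    have h2 : star (a (i - 2)) * a (i - 2) = (‖a (i - 2)‖ : ℂ) ^ 2 := by
      rw [RCLike.star_def, Complex.conj_mul']
    have hiff : ∀ x : ZMod (2 * p + 1), (i = x + 2) ↔ (x = i - 2) := fun x => by
      constructor
      · intro hx; rw [hx]; ring
      · intro hx; rw [hx]; ring
    simp only [hiff, ite_self, Finset.sum_ite_eq', Finset.mem_univ, if_true, h1, h2]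
    rw [key]
    ring
  · have h2 : (j + 2 : ZMod (2 * p + 1)) ≠ i + 2 := fun hc => h (by
      have := congrArg (· - 2) hc
      simp only [add_sub_cancel_right] at this
      exact this.symm)
    rw [if_neg h2, Finset.sum_eq_zero fun x _ => ?_]
    · simp [h]
    · split_ifs with h3 h4
      · exact absurd (h4.trans h3.symm) h
      · rfl
      · rfl
end

section
/- Let p ≥ 1 be an integer, n = 2p+1, and let q ∈ ℂ satisfy q^n = 1 and q ≠ 1. Let a : ZMod n → ℂ have a(i) ≠ 0 for all i and satisfy, for all i ∈ ZMod n, ‖a(i+2)‖² − ‖a(i)‖² = (q^(i+2) − q^(−(i+2)))/(q − q⁻¹). Let K be the diagonal matrix with K_{i,i} = q^i, let E₊ have (i,j) entry a(i) if j = i+2 and 0 otherwise, and let E₋ have (i,j) entry conj(a(j)) if i = j+2 and 0 otherwise. Then: (1) K is unitary with inverse the diagonal matrix with entries q^(−i); (2) E₋ is the conjugate transpose of E₊; (3) K·E₊ = q^(−2)·(E₊·K) and K·E₋ = q²·(E₋·K); (4) E₊·E₋ − E₋·E₊ = (K − K⁻¹)/(q − q⁻¹); and (5) E₊ and E₋ are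 invertible. -/
open Matrix in
theorem stmt_13 (p : ℕ) (hp : 1 ≤ p) (q : ℂ) (hq : q ^ (2 * p + 1) = 1)
    (hq1 : q ≠ 1) (a : ZMod (2 * p + 1) → ℂ) (ha0 : ∀ i, a i ≠ 0)
    (ha : ∀ i : ZMod (2 * p + 1),
      ((‖a (i + 2)‖ ^ 2 - ‖a i‖ ^ 2 : ℝ) : ℂ) =
        (q ^ (i + 2).val - (q ^ (i + 2).val)⁻¹) / (q - q⁻¹))
    (K Kinv Eplus Eminus : Matrix (ZMod (2 * p + 1)) (ZMod (2 * p + 1)) ℂ)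
    (hK : K = Matrix.diagonal fun i => q ^ i.val)
    (hKinv : Kinv = Matrix.diagonal fun i => (q ^ i.val)⁻¹)
    (hEplus : Eplus = Matrix.of fun i j => if j = i + 2 then a i else 0)
    (hEminus : Eminus = Matrix.of fun i j => if i = j + 2 then star (a j) else 0) :
    (K * Kinv = 1 ∧ Kinv * K = 1 ∧ Kᴴ = Kinv) ∧
    Eminus = Eplusᴴ ∧
    (K * Eplus = (q ^ 2)⁻¹ • (Eplus * K) ∧ K * Eminus = q ^ 2 • (Eminus * K)) ∧
    Eplus * Eminus - Eminus * Eplus = (q - q⁻¹)⁻¹ • (K - Kinv) ∧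
    IsUnit Eplus ∧ IsUnit Eminus := by
  haveI : NeZero (2 * p + 1) := ⟨by omega⟩
  have hq0 : q ≠ 0 := by
    intro h; rw [h] at hq; simp at hq
  have habs : ‖q‖ = 1 := by
    have h1 : ‖q‖ ^ (2 * p + 1) = 1 := by
      rw [← norm_pow, hq]; simp
    have h2 : ‖q‖ ^ (2 * p + 1) = 1 ^ (2 * p + 1) := by simpa using h1
    exact (pow_left_strictMonoOn₀ (by omega : 2 * p + 1 ≠ 0)).injOn
      (norm_nonneg q) (by norm_num) h2
  have hconj : (starRingEnd ℂ) q = q⁻¹ := (Complex.inv_eq_conj habs).symm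
  have hsq : ∀ z : ℂ, z * star z = ((‖z‖ ^ 2 : ℝ) : ℂ) := by
    intro z
    rw [RCLike.star_def, Complex.mul_conj, Complex.normSq_eq_norm_sq]
  have hsq' : ∀ z : ℂ, star z * z = ((‖z‖ ^ 2 : ℝ) : ℂ) := by
    intro z; rw [mul_comm]; exact hsq z
  have hmod : ∀ m : ℕ, q ^ (m % (2 * p + 1)) = q ^ m := by
    intro m
    conv_rhs => rw [← Nat.div_add_mod m (2 * p + 1)]
    rw [pow_add, pow_mul, hq, one_pow, one_mul]
  have hval2 : (2 : ZMod (2 * p + 1)).val = 2 := by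
    have : ((2 : ℕ) : ZMod (2 * p + 1)).val = 2 % (2 * p + 1) := ZMod.val_natCast _ 2
    simpa [Nat.mod_eq_of_lt (by omega : 2 < 2 * p + 1)] using this
  have hvadd : ∀ i : ZMod (2 * p + 1), q ^ (i + 2).val = q ^ i.val * q ^ 2 := by
    intro i
    rw [ZMod.val_add, hval2, hmod, pow_add]
  have hdiff : ∀ i : ZMod (2 * p + 1),
      ((‖a (i + 2)‖ ^ 2 - ‖a i‖ ^ 2 : ℝ) : ℂ) =
        (q - q⁻¹)⁻¹ * (q ^ (i + 2).val - (q ^ (i + 2).val)⁻¹) := by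
    intro i; rw [ha i, div_eq_inv_mul]
  have hK1 : K * Kinv = 1 := by
    rw [hK, hKinv, Matrix.diagonal_mul_diagonal]
    have : (fun i : ZMod (2 * p + 1) => q ^ i.val * (q ^ i.val)⁻¹) = fun _ => (1 : ℂ) :=
      funext fun i => mul_inv_cancel₀ (pow_ne_zero _ hq0)
    rw [this, Matrix.diagonal_one]
  have hK2 : Kinv * K = 1 := by
    rw [hKinv, hK, Matrix.diagonal_mul_diagonal]
    have : (fun i : ZMod (2 * p + 1) => (q ^ i.val)⁻¹ * q ^ i.val) = fun _ => (1 : ℂ) :=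
      funext fun i => inv_mul_cancel₀ (pow_ne_zero _ hq0)
    rw [this, Matrix.diagonal_one]
  have hKH : Kᴴ = Kinv := by
    rw [hK, hKinv]
    ext i j
    rw [Matrix.conjTranspose_apply, Matrix.diagonal_apply, Matrix.diagonal_apply]
    by_cases h : i = j
    · subst h
      rw [if_pos rfl, if_pos rfl, RCLike.star_def, map_pow, hconj, inv_pow]
    · rw [if_neg (fun hh : j = i => h hh.symm), if_neg h, star_zero]
  have hEH : Eminus = Eplusᴴ := by
    rw [hEplus, hEminus]
    ext i j
    simp only [conjTranspose_apply, of_apply]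
    split_ifs <;> simp
  have hEE : Eplus * Eminus = Matrix.diagonal fun i => ((‖a i‖ ^ 2 : ℝ) : ℂ) := by
    rw [hEplus, hEminus]
    ext i j
    simp only [Matrix.mul_apply, of_apply, ite_mul, zero_mul, Finset.sum_ite_eq',
      Finset.mem_univ, if_true, Matrix.diagonal_apply]
    by_cases h : i = j
    · subst h
      rw [if_pos rfl, if_pos rfl, hsq]
    · rw [if_neg (fun hh : i + 2 = j + 2 => h (by simpa using hh)), mul_zero, if_neg h]
  have hEE2 : Eminus * Eplus = Matrix.diagonal fun i => ((‖a (i - 2)‖ ^ 2 : ℝ) : ℂ) := by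
    rw [hEplus, hEminus]
    ext i j
    rw [Matrix.mul_apply]
    rw [Finset.sum_eq_single (i - 2)]
    · have h2 : i - 2 + 2 = i := sub_add_cancel i 2
      simp only [of_apply, Matrix.diagonal_apply, h2, eq_self_iff_true, if_true]
      by_cases h : i = j
      · subst h
        rw [if_pos rfl, hsq', if_pos rfl]
      · rw [if_neg (fun hh : j = i => h hh.symm), mul_zero, if_neg h]
    · intro k _ hk
      have : ¬ i = k + 2 := fun hh => hk (by rw [hh]; exact (add_sub_cancel_right k 2).symm ▸ rfl)
      simp [this]
    · intro hk
      exact absurd (Finset.mem_univ _) hk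
  refine ⟨⟨hK1, hK2, hKH⟩, hEH, ⟨?_, ?_⟩, ?_, ?_⟩
  · ext i j
    rw [hK, hEplus]
    simp only [Matrix.diagonal_mul, Matrix.smul_apply, Matrix.mul_diagonal, of_apply, smul_eq_mul]
    split_ifs with h
    · subst h
      rw [hvadd]
      field_simp
    · simp
  · ext i j
    rw [hK, hEminus]
    simp only [Matrix.diagonal_mul, Matrix.smul_apply, Matrix.mul_diagonal, of_apply, smul_eq_mul]
    split_ifs with h
    · rw [h, hvadd]
      ring
    · simp
  · rw [hEE, hEE2, hK, hKinv]
    ext i j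
    simp only [Matrix.sub_apply, Matrix.smul_apply, Matrix.diagonal_apply, smul_eq_mul]
    by_cases h : i = j
    · subst h
      simp only [eq_self_iff_true, if_true]
      have key := hdiff (i - 2)
      rw [sub_add_cancel] at key
      have cc : ((‖a i‖ ^ 2 : ℝ) : ℂ) - ((‖a (i - 2)‖ ^ 2 : ℝ) : ℂ)
          = ((‖a i‖ ^ 2 - ‖a (i - 2)‖ ^ 2 : ℝ) : ℂ) := by push_cast; ring
      rw [cc, key]
    · simp [h]
  · have hdet : IsUnit (Eplus.det * Eminus.det) := by
      rw [← Matrix.det_mul, hEE, Matrix.det_diagonal]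
      rw [isUnit_iff_ne_zero]
      apply Finset.prod_ne_zero_iff.mpr
      intro i _
      simpa using pow_ne_zero 2 (norm_ne_zero_iff.mpr (ha0 i))
    exact ⟨(Matrix.isUnit_iff_isUnit_det _).mpr (isUnit_of_mul_isUnit_left hdet),
      (Matrix.isUnit_iff_isUnit_det _).mpr (isUnit_of_mul_isUnit_right hdet)⟩
end

section
/- Let p ≥ 1 be an integer, n = 2p+1, let q ∈ ℂ satisfy q^n = 1, and let a : ZMod n → ℂ. Let K be the diagonal matrix with K_{i,i} = q^i, let E₊ have (i,j) entry a(i) if j = i+2 and 0 otherwise, and let E₋ have (i,j) entry conj(a(j)) if i = j+2 and 0 otherwise (indices in ZMod n). Then K^n = 1 (the identity matrix), E₊^n = (∏_{i ∈ ZMod n} a(i)) · 1, and E₋^n = (∏_{i ∈ ZMod n} conj(a(i))) · 1. -/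
lemma shift_pow_entry {n : ℕ} [NeZero n] (c : ZMod n) (f : ZMod n → ℂ) (k : ℕ)
    (i j : ZMod n) :
    ((Matrix.of fun i j => if j = i + c then f i else 0 :
        Matrix (ZMod n) (ZMod n) ℂ) ^ k) i j
      = if j = i + k • c then ∏ t ∈ Finset.range k, f (i + t • c) else 0 := by
  induction k generalizing j with
  | zero => simp [Matrix.one_apply, eq_comm]
  | succ k ih =>
    rw [pow_succ, Matrix.mul_apply]
    have step : ∀ x : ZMod n,
        ((Matrix.of fun i j => if j = i + c then f i else 0 :
          Matrix (ZMod n) (ZMod n) ℂ) ^ k) i x *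
          (Matrix.of fun i j => if j = i + c then f i else 0) x j
        = if x = j - c then
            ((Matrix.of fun i j => if j = i + c then f i else 0 :
              Matrix (ZMod n) (ZMod n) ℂ) ^ k) i x * f x else 0 := by
      intro x
      simp only [Matrix.of_apply, mul_ite, mul_zero]
      refine if_congr ?_ rfl rfl
      exact ⟨fun h => eq_sub_of_add_eq h.symm, fun h => by rw [h]; ring⟩
    simp only [step]
    rw [Finset.sum_ite_eq' Finset.univ (j - c)]
    simp only [Finset.mem_univ, if_true, ih]
    by_cases h : j = i + (k + 1) • c
    · have h' : j - c = i + k • c := by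
        rw [h, succ_nsmul]; ring
      rw [if_pos h', if_pos h, h', Finset.prod_range_succ]
    · have h' : j - c ≠ i + k • c := by
        intro hc
        apply h
        rw [succ_nsmul, ← add_assoc, ← hc]; ring
      rw [if_neg h', if_neg h, zero_mul]

lemma prod_range_cast {n : ℕ} [NeZero n] (h : ZMod n → ℂ) :
    ∏ t ∈ Finset.range n, h (t : ZMod n) = ∏ x : ZMod n, h x := by
  refine Finset.prod_bij' (fun t _ => (t : ZMod n)) (fun x _ => x.val) ?_ ?_ ?_ ?_ ?_
  · intro t ht; exact Finset.mem_univ _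
  · intro x _; exact Finset.mem_range.2 (ZMod.val_lt x)
  · intro t ht; exact ZMod.val_cast_of_lt (Finset.mem_range.1 ht)
  · intro x _; exact ZMod.natCast_rightInverse x
  · intro t _; rfl

lemma prod_shift {n : ℕ} [NeZero n] (h : ZMod n → ℂ) (i c : ZMod n) (hc : IsUnit c) :
    ∏ x : ZMod n, h (i + x * c) = ∏ x : ZMod n, h x := by
  obtain ⟨u, rfl⟩ := hc
  exact Equiv.prod_comp ((Units.mulRight u).trans (Equiv.addLeft i)) h

theorem stmt_15 (p : ℕ) (hp : 1 ≤ p) (q : ℂ) (hq : q ^ (2 * p + 1) = 1)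
    (a : ZMod (2 * p + 1) → ℂ)
    (K Eplus Eminus : Matrix (ZMod (2 * p + 1)) (ZMod (2 * p + 1)) ℂ)
    (hK : K = Matrix.diagonal fun i => q ^ i.val)
    (hEplus : Eplus = Matrix.of fun i j => if j = i + 2 then a i else 0)
    (hEminus : Eminus = Matrix.of fun i j => if i = j + 2 then star (a j) else 0) :
    K ^ (2 * p + 1) = 1 ∧
      Eplus ^ (2 * p + 1) = (∏ i : ZMod (2 * p + 1), a i) • (1 : Matrix _ _ ℂ) ∧
      Eminus ^ (2 * p + 1) = (∏ i : ZMod (2 * p + 1), star (a i)) • (1 : Matrix _ _ ℂ) := by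
  have hn : NeZero (2 * p + 1) := ⟨by omega⟩
  have h2 : IsUnit (2 : ZMod (2 * p + 1)) := by
    have := (ZMod.isUnit_iff_coprime 2 (2 * p + 1)).2 (by simp [Nat.coprime_two_left])
    simpa using this
  have hsmul : ∀ c : ZMod (2 * p + 1), (2 * p + 1) • c = 0 := by
    intro c
    rw [nsmul_eq_mul]
    simp [ZMod.natCast_self]
  refine ⟨?_, ?_, ?_⟩
  · rw [hK, Matrix.diagonal_pow]
    have : ((fun i : ZMod (2 * p + 1) => q ^ i.val) ^ (2 * p + 1)) = fun _ => 1 := by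
      funext i
      rw [Pi.pow_apply, ← pow_mul, mul_comm, pow_mul, hq, one_pow]
    rw [this, Matrix.diagonal_one]
  · rw [hEplus]
    ext i j
    rw [shift_pow_entry 2 a (2 * p + 1) i j]
    have key : ∏ t ∈ Finset.range (2 * p + 1), a (i + t • (2 : ZMod (2 * p + 1)))
        = ∏ x : ZMod (2 * p + 1), a x := by
      calc ∏ t ∈ Finset.range (2 * p + 1), a (i + t • (2 : ZMod (2 * p + 1)))
          = ∏ t ∈ Finset.range (2 * p + 1), a (i + (t : ZMod (2 * p + 1)) * 2) := by
            refine Finset.prod_congr rfl fun t _ => ?_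
            rw [nsmul_eq_mul]
        _ = ∏ x : ZMod (2 * p + 1), a (i + x * 2) := prod_range_cast (fun x => a (i + x * 2))
        _ = _ := prod_shift a i 2 h2
    rw [key, hsmul, add_zero, Matrix.smul_apply, Matrix.one_apply, smul_eq_mul]
    by_cases h : j = i
    · rw [if_pos h, if_pos h.symm, mul_one]
    · rw [if_neg h, if_neg (fun hc => h hc.symm), mul_zero]
  · have hEm : Eminus = Matrix.of fun i j =>
        if j = i + (-2) then star (a (i + (-2))) else 0 := by
      rw [hEminus]
      ext i j
      simp only [Matrix.of_apply]
      by_cases h : j = i + (-2)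
      · rw [if_pos h, if_pos (by rw [h]; ring), h]
      · rw [if_neg h, if_neg (fun hc => h (by rw [hc]; ring))]
    rw [hEm]
    ext i j
    rw [shift_pow_entry (-2) (fun x => star (a (x + (-2)))) (2 * p + 1) i j]
    have key : ∏ t ∈ Finset.range (2 * p + 1),
          star (a (i + t • (-2 : ZMod (2 * p + 1)) + (-2)))
        = ∏ x : ZMod (2 * p + 1), star (a x) := by
      calc ∏ t ∈ Finset.range (2 * p + 1), star (a (i + t • (-2 : ZMod (2 * p + 1)) + (-2)))
          = ∏ t ∈ Finset.range (2 * p + 1),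
              star (a ((i + (-2)) + (t : ZMod (2 * p + 1)) * (-2))) := by
            refine Finset.prod_congr rfl fun t _ => ?_
            rw [nsmul_eq_mul]
            ring_nf
        _ = ∏ x : ZMod (2 * p + 1), star (a ((i + (-2)) + x * (-2))) := prod_range_cast (fun x => star (a ((i + (-2)) + x * (-2))))
        _ = _ := prod_shift (fun x => star (a x)) (i + (-2)) (-2) (by simpa using h2.neg)
    rw [key, hsmul, add_zero, Matrix.smul_apply, Matrix.one_apply, smul_eq_mul]
    by_cases h : j = i
    · rw [if_pos h, if_pos h.symm, mul_one]
    · rw [if_neg h, if_neg (fun hc => h hc.symm), mul_zero]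
end

section
/- Let p ≥ 1 be an integer, n = 2p+1, and let q ∈ ℂ be a primitive n-th root of unity. Let a : ZMod n → ℂ have a(i) ≠ 0 for all i. Let K be the diagonal matrix with K_{i,i} = q^i, let E₊ have (i,j) entry a(i) if j = i+2 and 0 otherwise, and let E₋ have (i,j) entry conj(a(j)) if i = j+2 and 0 otherwise. Then every linear subspace W of ℂ^(ZMod n) that is invariant under the three linear maps determined by K, E₊, and E₋ is either the zero subspace or all of ℂ^(ZMod n). -/
theorem stmt_16 (p : ℕ) (hp : 1 ≤ p) (q : ℂ)
    (hq : IsPrimitiveRoot q (2 * p + 1))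
    (a : ZMod (2 * p + 1) → ℂ) (ha0 : ∀ i, a i ≠ 0)
    (K Eplus Eminus : Matrix (ZMod (2 * p + 1)) (ZMod (2 * p + 1)) ℂ)
    (hK : K = Matrix.diagonal fun i => q ^ i.val)
    (hEplus : Eplus = Matrix.of fun i j => if j = i + 2 then a i else 0)
    (hEminus : Eminus = Matrix.of fun i j => if i = j + 2 then star (a j) else 0)
    (W : Submodule ℂ (ZMod (2 * p + 1) → ℂ))
    (hWK : ∀ v ∈ W, K.mulVec v ∈ W)
    (hWplus : ∀ v ∈ W, Eplus.mulVec v ∈ W)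
    (hWminus : ∀ v ∈ W, Eminus.mulVec v ∈ W) :
    W = ⊥ ∨ W = ⊤ := by
  haveI : NeZero (2 * p + 1) := ⟨by omega⟩
  have hdist : ∀ i j : ZMod (2 * p + 1), q ^ i.val = q ^ j.val → i = j := by
    intro i j h
    have := hq.pow_inj (ZMod.val_lt i) (ZMod.val_lt j) h
    exact ZMod.val_injective _ this
  by_cases hW : W = ⊥
  · exact Or.inl hW
  right
  have key : ∀ (m : ℕ) (v : ZMod (2 * p + 1) → ℂ), v ∈ W → v ≠ 0 →
      (Finset.univ.filter (fun i => v i ≠ 0)).card ≤ m →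
      ∃ i, (Pi.single i 1 : ZMod (2 * p + 1) → ℂ) ∈ W := by
    intro m
    induction m with
    | zero =>
      intro v hv hv0 hcard
      exfalso
      apply hv0
      funext i
      simp only [Pi.zero_apply]
      by_contra hi
      have hmem : i ∈ Finset.univ.filter (fun i => v i ≠ 0) := by simp [hi]
      have := Finset.card_pos.mpr ⟨i, hmem⟩
      omega
    | succ m ih =>
      intro v hv hv0 hcard
      obtain ⟨i, hi⟩ : ∃ i, v i ≠ 0 := by
        by_contra h
        push_neg at h
        exact hv0 (funext fun i => by simpa using h i)
      by_cases hsingle : ∀ j, j ≠ i → v j = 0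
      · refine ⟨i, ?_⟩
        have heq : (Pi.single i 1 : ZMod (2 * p + 1) → ℂ) = (v i)⁻¹ • v := by
          funext j
          by_cases hj : j = i
          · subst hj; simp [inv_mul_cancel₀ hi]
          · simp [Pi.single_apply, hj, hsingle j hj]
        rw [heq]
        exact W.smul_mem _ hv
      · push_neg at hsingle
        obtain ⟨j, hj, hvj⟩ := hsingle
        set w : ZMod (2 * p + 1) → ℂ := K.mulVec v - q ^ i.val • v with hw
        have hwW : w ∈ W := W.sub_mem (hWK v hv) (W.smul_mem _ hv)
        have hwval : ∀ k, w k = (q ^ k.val - q ^ i.val) * v k := by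
          intro k
          simp [hw, hK, Matrix.mulVec_diagonal, sub_mul]
        have hwi : w i = 0 := by rw [hwval]; ring
        have hwj : w j ≠ 0 := by
          rw [hwval]
          refine mul_ne_zero (sub_ne_zero.mpr ?_) hvj
          exact fun h => hj (hdist j i h)
        have hsub : (Finset.univ.filter (fun k => w k ≠ 0)) ⊆
            (Finset.univ.filter (fun k => v k ≠ 0)).erase i := by
          intro k hk
          simp only [Finset.mem_filter, Finset.mem_univ, true_and] at hk
          refine Finset.mem_erase.mpr ⟨?_, ?_⟩
          · rintro rfl; exact hk hwi
          · simp only [Finset.mem_filter, Finset.mem_univ, true_and]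
            intro hvk
            exact hk (by rw [hwval, hvk, mul_zero])
        have hcard' : (Finset.univ.filter (fun k => w k ≠ 0)).card ≤ m := by
          have h1 := Finset.card_le_card hsub
          have h2 : i ∈ Finset.univ.filter (fun k => v k ≠ 0) := by simp [hi]
          have h3 := Finset.card_erase_of_mem h2
          omega
        exact ih w hwW (fun h => hwj (by simp [h])) hcard'
  obtain ⟨v, hvW, hv0⟩ := (Submodule.ne_bot_iff W).mp hW
  obtain ⟨k, hk⟩ := key _ v hvW hv0 le_rfl
  have step : ∀ k : ZMod (2 * p + 1), (Pi.single k 1 : ZMod (2 * p + 1) → ℂ) ∈ W →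
      (Pi.single (k - 2) 1 : ZMod (2 * p + 1) → ℂ) ∈ W := by
    intro k hk
    have h1 : Eplus.mulVec (Pi.single k 1) = Pi.single (k - 2) (a (k - 2)) := by
      funext i
      rw [hEplus]
      simp only [Matrix.mulVec, dotProduct, Matrix.of_apply, Pi.single_apply,
        ite_mul, zero_mul, mul_ite, mul_one, mul_zero]
      rw [Finset.sum_ite_eq' Finset.univ k (fun x => if x = i + 2 then a i else 0)]
      by_cases hik : i = k - 2
      · subst hik
        simp [sub_add_cancel]
      · have h2 : k ≠ i + 2 := fun h => hik (by rw [h]; ring)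
        simp [h2, hik]
    have h2 := hWplus _ hk
    rw [h1] at h2
    have h3 := W.smul_mem (a (k - 2))⁻¹ h2
    have h4 : (a (k - 2))⁻¹ • (Pi.single (k - 2) (a (k - 2)) : ZMod (2 * p + 1) → ℂ) =
        (Pi.single (k - 2) 1 : ZMod (2 * p + 1) → ℂ) := by
      funext j
      simp only [Pi.smul_apply, Pi.single_apply, smul_eq_mul]
      split
      · exact inv_mul_cancel₀ (ha0 _)
      · simp
    rwa [h4] at h3
  have iter : ∀ (m : ℕ),
      (Pi.single (k - 2 * (m : ZMod (2 * p + 1))) 1 : ZMod (2 * p + 1) → ℂ) ∈ W := by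
    intro m
    induction m with
    | zero => simpa using hk
    | succ m ih =>
      have h := step _ ih
      have he : k - 2 * (((m : ℕ) + 1 : ℕ) : ZMod (2 * p + 1)) =
          k - 2 * (m : ZMod (2 * p + 1)) - 2 := by push_cast; ring
      rw [he]
      exact h
  have hall : ∀ j : ZMod (2 * p + 1), (Pi.single j 1 : ZMod (2 * p + 1) → ℂ) ∈ W := by
    intro j
    have h2u : IsUnit (2 : ZMod (2 * p + 1)) := by
      have hcast : ((2 : ℕ) : ZMod (2 * p + 1)) = (2 : ZMod (2 * p + 1)) := by push_cast; ring
      rw [← hcast, ZMod.isUnit_iff_coprime]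
      rw [Nat.Prime.coprime_iff_not_dvd Nat.prime_two]
      omega
    obtain ⟨u, hu⟩ := h2u
    have hc : 2 * (↑u⁻¹ : ZMod (2 * p + 1)) = 1 := by
      rw [← hu]; exact_mod_cast u.mul_inv
    have hm : k - 2 * ((((↑u⁻¹ : ZMod (2 * p + 1)) * (k - j)).val : ℕ) : ZMod (2 * p + 1)) = j := by
      rw [ZMod.natCast_val, ZMod.cast_id]
      calc k - 2 * ((↑u⁻¹ : ZMod (2 * p + 1)) * (k - j))
          = k - (2 * (↑u⁻¹ : ZMod (2 * p + 1))) * (k - j) := by ring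
        _ = j := by rw [hc]; ring
    have := iter ((↑u⁻¹ : ZMod (2 * p + 1)) * (k - j)).val
    rwa [hm] at this
  rw [Submodule.eq_top_iff']
  intro x
  have hx : x = ∑ i : ZMod (2 * p + 1), x i • (Pi.single i 1 : ZMod (2 * p + 1) → ℂ) := by
    funext j
    simp [Finset.sum_apply, Pi.single_apply]
  rw [hx]
  exact Submodule.sum_mem _ fun i _ => W.smul_mem _ (hall i)
end
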